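/- Let X be an Archimedean vector lattice equipped with a convergence θ (satisfying axioms (1)–(4)) and let Y be a vector sublattice of X. Then Y is sequentially θ-closed in X if and only if Y is sequentially uθ-closed in X. -/
import Mathlib


open Filter

/-- A convergence structure `θ` on a vector lattice `X`, assigning to nets (maps from
nonempty directed preordered index types) limit points, and satisfying axioms (1)–(4):
(1) constant nets converge; (2) linearity, and `t • x →θ 0` as the scalar net `t → 0`;
(3) domination: if `x_α →θ 0` and `|y_α| ≤ |x_α|` then `y_α →θ 0`;
(4) every subnet of a `θ`-convergent net `θ`-converges to the same limit. -/
structure VLConvergence (X : Type*) [Lattice X] [AddCommGroup X] [Module ℝ X] where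
  conv : ∀ {ι : Type} [Preorder ι] [IsDirected ι (· ≤ ·)] [Nonempty ι], (ι → X) → X → Prop
  conv_const : ∀ {ι : Type} [Preorder ι] [IsDirected ι (· ≤ ·)] [Nonempty ι] (x : X),
    conv (fun _ : ι => x) x
  conv_add_smul : ∀ {ι : Type} [Preorder ι] [IsDirected ι (· ≤ ·)] [Nonempty ι]
    (f g : ι → X) (x y : X) (l : ℝ),
    conv f x → conv g y → conv (fun α => f α + l • g α) (x + l • y)
  conv_smul_zero : ∀ {ι : Type} [Preorder ι] [IsDirected ι (· ≤ ·)] [Nonempty ι]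
    (t : ι → ℝ) (x : X), Filter.Tendsto t Filter.atTop (nhds (0 : ℝ)) →
    conv (fun α => t α • x) (0 : X)
  conv_dominated : ∀ {ι : Type} [Preorder ι] [IsDirected ι (· ≤ ·)] [Nonempty ι]
    (f g : ι → X), conv f 0 → (∀ α, |g α| ≤ |f α|) → conv g 0
  conv_subnet : ∀ {ι κ : Type} [Preorder ι] [IsDirected ι (· ≤ ·)] [Nonempty ι]
    [Preorder κ] [IsDirected κ (· ≤ ·)] [Nonempty κ]
    (f : ι → X) (x : X) (φ : κ → ι), conv f x →
    (∀ α₀ : ι, ∃ β₀ : κ, ∀ β, β₀ ≤ β → α₀ ≤ φ β) → conv (fun β => f (φ β)) x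

/-- The Archimedean property for a vector lattice. -/
def IsArchimedeanVL (X : Type*) [Lattice X] [AddCommGroup X] : Prop :=
  ∀ x y : X, 0 ≤ x → (∀ n : ℕ, n • x ≤ y) → x = 0

variable {X : Type*} [Lattice X] [AddCommGroup X]
  [CovariantClass X X (· + ·) (· ≤ ·)] [Module ℝ X] [PosSMulMono ℝ X]

/-- The unbounded modification `uθ` of a convergence `θ`:
`x_α →uθ x` iff `(x_α ⊔ b) ⊓ c →θ (x ⊔ b) ⊓ c` for all `b ≤ c`. -/
def VLConvergence.uconv (θ : VLConvergence X)
    {ι : Type} [Preorder ι] [IsDirected ι (· ≤ ·)] [Nonempty ι]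
    (f : ι → X) (x : X) : Prop :=
  ∀ b c : X, b ≤ c → θ.conv (fun α => (f α ⊔ b) ⊓ c) ((x ⊔ b) ⊓ c)

/-- `Y` is sequentially `θ`-closed. -/
def VLConvergence.IsSeqClosedSet (θ : VLConvergence X) (Y : Set X) : Prop :=
  ∀ (f : ℕ → X) (x : X), (∀ n, f n ∈ Y) → θ.conv f x → x ∈ Y

/-- `Y` is sequentially `uθ`-closed. -/
def VLConvergence.IsSeqUClosedSet (θ : VLConvergence X) (Y : Set X) : Prop :=
  ∀ (f : ℕ → X) (x : X), (∀ n, f n ∈ Y) → θ.uconv f x → x ∈ Y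


section Aux

variable (θ : VLConvergence X)

lemma aux_conv_neg {ι : Type} [Preorder ι] [IsDirected ι (· ≤ ·)] [Nonempty ι]
    (f : ι → X) (x : X) (hf : θ.conv f x) : θ.conv (fun α => -f α) (-x) := by
  have h := θ.conv_add_smul (fun _ : ι => (0 : X)) f 0 x (-1) (θ.conv_const 0) hf
  simpa using h

lemma aux_inf_sup_swap (a b c : X) (hbc : b ≤ c) : (a ⊓ c) ⊔ b = (a ⊔ b) ⊓ c := by
  letI : DistribLattice X := AddCommGroup.toDistribLattice X
  rw [sup_inf_right, sup_eq_left.2 hbc]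

lemma aux_inf_mem (Y : Submodule ℝ X) (hYlat : ∀ a b : X, a ∈ Y → b ∈ Y → a ⊔ b ∈ Y)
    (a b : X) (ha : a ∈ Y) (hb : b ∈ Y) : a ⊓ b ∈ Y := by
  have h : a ⊓ b = a + b - (a ⊔ b) := eq_sub_of_add_eq (inf_add_sup a b)
  rw [h]
  exact sub_mem (add_mem ha hb) (hYlat a b ha hb)

lemma aux_conv_uconv {ι : Type} [Preorder ι] [IsDirected ι (· ≤ ·)] [Nonempty ι]
    (f : ι → X) (x : X) (hf : θ.conv f x) : θ.uconv f x := by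
  intro b c hbc
  have hd : θ.conv (fun α => f α + (-1 : ℝ) • x) (x + (-1 : ℝ) • x) :=
    θ.conv_add_smul f (fun _ => x) x x (-1) hf (θ.conv_const x)
  have hd' : θ.conv (fun α => f α - x) 0 := by simpa [sub_eq_add_neg] using hd
  have hg : θ.conv (fun α => (f α ⊔ b) ⊓ c - (x ⊔ b) ⊓ c) 0 := by
    refine θ.conv_dominated (fun α => f α - x) _ hd' (fun α => ?_)
    calc |(f α ⊔ b) ⊓ c - (x ⊔ b) ⊓ c| ≤ |(f α ⊔ b) - (x ⊔ b)| :=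
          abs_inf_sub_inf_le_abs _ _ _
      _ ≤ |f α - x| := abs_sup_sub_sup_le_abs _ _ _
      _ ≤ |f α - x| := le_rfl
  have := θ.conv_add_smul _ (fun _ => (x ⊔ b) ⊓ c) 0 ((x ⊔ b) ⊓ c) 1 hg
    (θ.conv_const ((x ⊔ b) ⊓ c))
  simpa using this

lemma aux_uconv_neg {ι : Type} [Preorder ι] [IsDirected ι (· ≤ ·)] [Nonempty ι]
    (f : ι → X) (x : X) (hf : θ.uconv f x) : θ.uconv (fun α => -f α) (-x) := by
  intro b c hbc
  have hcb : -c ≤ -b := by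
    have := add_le_add_left hbc (-b + -c)
    simpa [add_comm, add_left_comm, add_assoc] using this
  have h := hf (-c) (-b) hcb
  have h2 := aux_conv_neg θ _ _ h
  have key : ∀ a : X, -((a ⊔ -c) ⊓ -b) = (-a ⊔ b) ⊓ c := by
    intro a
    rw [neg_inf, neg_sup, neg_neg, neg_neg]
    exact aux_inf_sup_swap (-a) b c hbc
  simp only [key] at h2
  exact h2

lemma aux_posPart_mem (Y : Submodule ℝ X) (hYlat : ∀ a b : X, a ∈ Y → b ∈ Y → a ⊔ b ∈ Y)
    (hcl : θ.IsSeqClosedSet (Y : Set X)) (f : ℕ → X) (x : X)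
    (hfY : ∀ n, f n ∈ Y) (hu : θ.uconv f x) : x ⊔ 0 ∈ Y := by
  have hA : ∀ m : ℕ, (x ⊔ 0) ⊓ (f m ⊔ 0) ∈ Y := by
    intro m
    have hc : (0 : X) ≤ f m ⊔ 0 := le_sup_right
    have hconv := hu 0 (f m ⊔ 0) hc
    refine hcl _ _ (fun n => ?_) hconv
    exact aux_inf_mem Y hYlat _ _ (hYlat _ _ (hfY n) Y.zero_mem)
      (hYlat _ _ (hfY m) Y.zero_mem)
  have hconv := hu 0 (x ⊔ 0) le_sup_right
  have hconv' : θ.conv (fun m => (f m ⊔ 0) ⊓ (x ⊔ 0)) (x ⊔ 0) := by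
    simpa [inf_idem] using hconv
  refine hcl _ _ (fun m => ?_) hconv'
  rw [inf_comm]
  exact hA m

end Aux

theorem stmt15 (hArch : IsArchimedeanVL X) (θ : VLConvergence X)
    (Y : Submodule ℝ X) (hYlat : ∀ a b : X, a ∈ Y → b ∈ Y → a ⊔ b ∈ Y) :
    θ.IsSeqClosedSet (Y : Set X) ↔ θ.IsSeqUClosedSet (Y : Set X) := by
  constructor
  · intro hcl f x hfY hu
    have hpos : x ⊔ 0 ∈ Y := aux_posPart_mem θ Y hYlat hcl f x hfY hu
    have hneg : (-x) ⊔ 0 ∈ Y :=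
      aux_posPart_mem θ Y hYlat hcl (fun n => -f n) (-x)
        (fun n => Y.neg_mem (hfY n)) (aux_uconv_neg θ f x hu)
    have hx : x = (x ⊔ 0) - ((-x) ⊔ 0) := by
      have h1 : (-x) ⊔ 0 = -(x ⊓ 0) := by rw [neg_inf, neg_zero]
      rw [h1, sub_neg_eq_add, add_comm (x ⊔ 0), inf_add_sup, add_zero]
    rw [hx]
    exact sub_mem hpos hneg
  · intro hucl f x hfY hf
    exact hucl f x hfY (aux_conv_uconv θ f x hf)
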